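/- Let ε > 0, t ≥ 1 integer, C_0, C_1 > 0 with C_0 + C_1 = 1, and suppose that for a family parameterized by h > 0 the smoothness indicators satisfy I_0(h) = O(h^(2m)) with I_0(h) ≥ c·h^(2m) > 0 and I_1(h) ≥ δ > 0 for all small h (discontinuity affecting only I_1), with ε ≤ c·h^(2m). Then the nonlinear weights ω_0 = [C_0/(ε+I_0)^t] / [C_0/(ε+I_0)^t + C_1/(ε+I_1)^t] and ω_1 = 1 - ω_0 satisfy ω_0 = 1 + O(h^(2mt)) and ω_1 = O(h^(2mt)) as h → 0. -/

import Mathlib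

/-- Case 2 of Proposition 4 (discontinuity detection): if the smoothness indicator
`I_0(h)` is of exact size `h^(2m)` (smooth stencil) while `I_1(h)` stays bounded below
by `δ > 0` (stencil crossed by the discontinuity), and `ε ≤ c h^(2m)`, then the
nonlinear weights satisfy `ω_0 = 1 + O(h^(2mt))` and `ω_1 = O(h^(2mt))`. -/
theorem weno_weights_discontinuity_detection (m t : ℕ) (hm : 1 ≤ m) (ht : 1 ≤ t)
    (C0 C1 ε c δ A : ℝ) (hC0 : 0 < C0) (hC1 : 0 < C1) (hCsum : C0 + C1 = 1)
    (hε : 0 < ε) (hc : 0 < c) (hδ : 0 < δ)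
    (I0 I1 : ℝ → ℝ)
    (hI0low : ∀ h : ℝ, 0 < h → c * h ^ (2 * m) ≤ I0 h)
    (hI0up : ∀ h : ℝ, 0 < h → I0 h ≤ A * h ^ (2 * m))
    (hI1 : ∀ h : ℝ, 0 < h → δ ≤ I1 h) :
    ∃ C : ℝ, ∀ h : ℝ, 0 < h → h ≤ 1 → ε ≤ c * h ^ (2 * m) →
      let α0 : ℝ := C0 / (ε + I0 h) ^ t
      let α1 : ℝ := C1 / (ε + I1 h) ^ t
      |α0 / (α0 + α1) - 1| ≤ C * h ^ (2 * m * t) ∧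
      |α1 / (α0 + α1)| ≤ C * h ^ (2 * m * t) := by
  refine ⟨(C1 / C0) * ((c + |A|) / δ) ^ t, ?_⟩
  intro h hh h1 hεh
  have h2m : 0 < h ^ (2 * m) := pow_pos hh _
  have hI0 := hI0low h hh
  have hI0u := hI0up h hh
  have hI1h := hI1 h hh
  have hd0 : 0 < ε + I0 h := by nlinarith
  have hd1 : 0 < ε + I1 h := by linarith
  intro a0 a1
  have ha0pos : 0 < a0 := div_pos hC0 (pow_pos hd0 t)
  have ha1pos : 0 < a1 := div_pos hC1 (pow_pos hd1 t)
  have hsum : 0 < a0 + a1 := by linarith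
  have key : a1 / (a0 + a1) ≤ (C1 / C0) * ((c + |A|) / δ) ^ t * h ^ (2 * m * t) := by
    have step1 : a1 / (a0 + a1) ≤ a1 / a0 := by
      gcongr
      linarith
    have eq1 : a1 / a0 = (C1 * (ε + I0 h) ^ t) / (C0 * (ε + I1 h) ^ t) := by
      show C1 / (ε + I1 h) ^ t / (C0 / (ε + I0 h) ^ t) = _
      field_simp
    have hnum : C1 * (ε + I0 h) ^ t ≤ C1 * ((c + |A|) * h ^ (2 * m)) ^ t := by
      gcongr
      nlinarith [le_abs_self A]
    have hden : C0 * δ ^ t ≤ C0 * (ε + I1 h) ^ t := by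
      gcongr
      linarith
    have step2 : (C1 * (ε + I0 h) ^ t) / (C0 * (ε + I1 h) ^ t)
        ≤ (C1 * ((c + |A|) * h ^ (2 * m)) ^ t) / (C0 * δ ^ t) := by
      apply div_le_div₀ (by positivity) hnum (by positivity) hden
    have eq2 : (C1 * ((c + |A|) * h ^ (2 * m)) ^ t) / (C0 * δ ^ t)
        = (C1 / C0) * ((c + |A|) / δ) ^ t * h ^ (2 * m * t) := by
      rw [mul_pow, div_pow, pow_mul, ← pow_mul h]
      field_simp
      ring
    calc a1 / (a0 + a1) ≤ a1 / a0 := step1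
      _ = _ := eq1
      _ ≤ _ := step2
      _ = _ := eq2
  have habs : |a1 / (a0 + a1)| = a1 / (a0 + a1) :=
    abs_of_nonneg (by positivity)
  have habs0 : |a0 / (a0 + a1) - 1| = a1 / (a0 + a1) := by
    have : a0 / (a0 + a1) - 1 = -(a1 / (a0 + a1)) := by
      field_simp
      ring
    rw [this, abs_neg, habs]
  constructor
  · rw [habs0]; exact key
  · rw [habs]; exact key
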